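/- arXiv:2304.06318 — 2 statements merged into one kernel-verified Lean document; each statement's English description precedes it below -/
import Mathlib

section
/- Let G be a finite connected graph with set of blocks 𝓑 and let B ∈ 𝓑. The inequality x_B ≤ 1 defines a facet of CBP(G), i.e., the set {x ∈ CBP(G) : x_B = 1} is a face of CBP(G) of dimension |𝓑| − 1. -/
open Set SimpleGraph

set_option linter.unusedSectionVars false
set_option linter.unreachableTactic false
set_option linter.unusedTactic false
set_option maxHeartbeats 1000000

noncomputable section

namespace ConnectedBlocksPaper

variable {V : Type} [Fintype V] [DecidableEq V]

/-- A subgraph is 2-connected: at least 3 vertices and removing any vertex keeps it connected. -/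
def IsTwoConnectedSub (G : SimpleGraph V) (H : G.Subgraph) : Prop :=
  3 ≤ H.verts.ncard ∧ ∀ v ∈ H.verts, (H.deleteVerts {v}).Connected

/-- A block of `G`: a maximal 2-connected subgraph, or a bridge together with its two
incident vertices. -/
def IsBlock (G : SimpleGraph V) (B : G.Subgraph) : Prop :=
  (IsTwoConnectedSub G B ∧ ∀ B' : G.Subgraph, IsTwoConnectedSub G B' → B ≤ B' → B' = B)
  ∨ (∃ (u v : V) (h : G.Adj u v), G.IsBridge s(u, v) ∧ B = G.subgraphOfAdj h)

/-- The set `𝓑` of blocks of `G`, as a type. -/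
abbrev Block (G : SimpleGraph V) := {B : G.Subgraph // IsBlock G B}

/-- The subgraph `G[𝓐]` induced by a set of blocks. -/
def blockUnion (G : SimpleGraph V) (𝓐 : Set (Block G)) : G.Subgraph :=
  ⨆ B ∈ 𝓐, (B : G.Subgraph)

/-- `G[𝓐]` is connected (the empty set of blocks counts as connected). -/
def ConnBlocks (G : SimpleGraph V) (𝓐 : Set (Block G)) : Prop :=
  𝓐 = ∅ ∨ (blockUnion G 𝓐).Connected

/-- The incidence vector `χ^𝓐 ∈ {0,1}^𝓑` of a set of blocks `𝓐 ⊆ 𝓑`. -/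
def incVec (G : SimpleGraph V) (𝓐 : Set (Block G)) : Block G → ℝ :=
  Set.indicator 𝓐 1

/-- The connected blocks polytope `CBP(G) ⊆ ℝ^𝓑`. -/
def CBP (G : SimpleGraph V) : Set (Block G → ℝ) :=
  convexHull ℝ {x | ∃ 𝓐 : Set (Block G), ConnBlocks G 𝓐 ∧ x = incVec G 𝓐}

/-- `F` is a face of the convex set `P`. -/
def IsFaceOf {E : Type*} [AddCommGroup E] [Module ℝ E] (P F : Set E) : Prop :=
  F ⊆ P ∧ Convex ℝ F ∧
    ∀ x ∈ P, ∀ y ∈ P, ∀ t : ℝ, 0 < t → t < 1 →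
      t • x + (1 - t) • y ∈ F → x ∈ F ∧ y ∈ F

/-- The dimension of a polytope: the dimension of its affine hull. -/
def polyDim {E : Type*} [AddCommGroup E] [Module ℝ E] (P : Set E) : ℕ :=
  Module.finrank ℝ (affineSpan ℝ P).direction

/-- A facet is a face of dimension `dim P - 1`. -/
def IsFacetOf {E : Type*} [AddCommGroup E] [Module ℝ E] (P F : Set E) : Prop :=
  IsFaceOf P F ∧ polyDim F = polyDim P - 1

/-- `v` is a cut vertex of `G`: deleting `v` from the connected graph `G` leaves more than
one component. -/
def IsCutVertex (G : SimpleGraph V) (v : V) : Prop :=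
  ¬ (G.induce ({v}ᶜ : Set V)).Preconnected

/-- `𝓑⟨𝓐⟩`: the smallest set of blocks inducing a connected subgraph and containing `𝓐`. -/
def blockClosure (G : SimpleGraph V) (𝓐 : Set (Block G)) : Set (Block G) :=
  ⋂₀ {𝓒 : Set (Block G) | 𝓐 ⊆ 𝓒 ∧ ConnBlocks G 𝓒}

/-- An independent set of blocks: no two blocks share a common vertex. -/
def IndepBlocks (G : SimpleGraph V) (𝓘 : Set (Block G)) : Prop :=
  ∀ B₁ ∈ 𝓘, ∀ B₂ ∈ 𝓘, B₁ ≠ B₂ →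
    ((B₁ : G.Subgraph).verts ∩ (B₂ : G.Subgraph).verts) = ∅

/-- `(𝓘, α)` is an independent blocks inequality. -/
def IsIBI (G : SimpleGraph V) (𝓘 : Set (Block G)) (α : Block G → ℤ) : Prop :=
  IndepBlocks G 𝓘 ∧
  (∀ B, B ∉ blockClosure G 𝓘 → α B = 0) ∧
  (∀ B ∈ 𝓘, α B = 1) ∧
  (∀ B ∈ blockClosure G 𝓘 \ 𝓘, α B ≤ 0) ∧
  (∑ᶠ B ∈ blockClosure G 𝓘 \ 𝓘, α B = -((𝓘.ncard : ℤ) - 1)) ∧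
  (∀ I ⊆ 𝓘, ∑ᶠ B ∈ blockClosure G I \ 𝓘, α B ≤ -((I.ncard : ℤ) - 1))

/-- `𝓑[H]`: the set of blocks (of `G`) of the subgraph `H`. -/
def blocksOf (G : SimpleGraph V) (H : G.Subgraph) : Set (Block G) :=
  {B : Block G | (B : G.Subgraph) ≤ H}

/-- `𝒦_v`: the components of `G - v` with `v` (and its incident edges) added back. -/
def Kv (G : SimpleGraph V) (v : V) : Set G.Subgraph :=
  {H | ∃ C : (G.induce ({v}ᶜ : Set V)).ConnectedComponent,
        H = (⊤ : G.Subgraph).induce (Subtype.val '' C.supp ∪ {v})}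

/-- A polytope is simple if every vertex lies in exactly `dim P` facets. -/
def IsSimplePolytope {E : Type*} [AddCommGroup E] [Module ℝ E] (P : Set E) : Prop :=
  ∀ x ∈ P.extremePoints ℝ, {F : Set E | IsFacetOf P F ∧ x ∈ F}.ncard = polyDim P

/-- A simplex: the convex hull of an affinely independent finite set. -/
def IsSimplex {E : Type*} [AddCommGroup E] [Module ℝ E] (F : Set E) : Prop :=
  ∃ s : Finset E, AffineIndependent ℝ ((↑) : s → E) ∧ F = convexHull ℝ (s : Set E)

/-- A polytope is simplicial if every facet is a simplex. -/
def IsSimplicialPolytope {E : Type*} [AddCommGroup E] [Module ℝ E] (P : Set E) : Prop :=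
  ∀ F : Set E, IsFacetOf P F → IsSimplex F

/-- The graph of a polytope: extreme points, adjacent when they span a 1-dimensional face. -/
def polyGraph {E : Type*} [AddCommGroup E] [Module ℝ E] (P : Set E) : SimpleGraph E where
  Adj x y := x ≠ y ∧ x ∈ P.extremePoints ℝ ∧ y ∈ P.extremePoints ℝ ∧
    IsFaceOf P (segment ℝ x y) ∧ polyDim (segment ℝ x y) = 1
  symm := by
    constructor
    rintro x y ⟨hxy, hx, hy, hF, hd⟩
    exact ⟨hxy.symm, hy, hx, by rwa [segment_symm], by rwa [segment_symm]⟩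
  loopless := by constructor; rintro x ⟨h, -⟩; exact h rfl

lemma connected_of_verts_singleton {G : SimpleGraph V} {H : G.Subgraph} {a : V}
    (h : H.verts = {a}) : H.Connected := by
  rw [Subgraph.connected_iff]
  refine ⟨?_, ⟨a, by simp [h]⟩⟩
  constructor
  rintro ⟨x, hx⟩ ⟨y, hy⟩
  rw [h, Set.mem_singleton_iff] at hx hy
  subst hx; subst hy
  rfl

lemma deleteVerts_of_disjoint {G : SimpleGraph V} {H : G.Subgraph} {s : Set V}
    (h : H.verts ∩ s = ∅) : H.deleteVerts s = H := by
  rw [← Subgraph.deleteVerts_inter_verts_left_eq, h, Subgraph.deleteVerts_empty]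

lemma deleteVerts_sup {G : SimpleGraph V} (H K : G.Subgraph) (s : Set V) :
    (H ⊔ K).deleteVerts s = H.deleteVerts s ⊔ K.deleteVerts s := by
  ext v w
  · simp only [Subgraph.deleteVerts_verts, Subgraph.verts_sup]
    constructor
    · rintro ⟨(h | h), hs⟩
      · exact Or.inl ⟨h, hs⟩
      · exact Or.inr ⟨h, hs⟩
    · rintro (⟨h, hs⟩ | ⟨h, hs⟩)
      · exact ⟨Or.inl h, hs⟩
      · exact ⟨Or.inr h, hs⟩
  · simp only [Subgraph.deleteVerts_adj, Subgraph.verts_sup, Subgraph.sup_adj, Set.mem_union]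
    constructor
    · rintro ⟨hv, hvs, hw, hws, (h | h)⟩
      · exact Or.inl ⟨h.fst_mem, hvs, h.snd_mem, hws, h⟩
      · exact Or.inr ⟨h.fst_mem, hvs, h.snd_mem, hws, h⟩
    · rintro (⟨hv, hvs, hw, hws, h⟩ | ⟨hv, hvs, hw, hws, h⟩)
      · exact ⟨Or.inl hv, hvs, Or.inl hw, hws, Or.inl h⟩
      · exact ⟨Or.inr hv, hvs, Or.inr hw, hws, Or.inr h⟩

/-- Deleting the start vertex of a nontrivial path leaves a connected subgraph. -/
lemma path_deleteVerts_start_connected {G : SimpleGraph V} {b a : V} (r : G.Walk b a)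
    (hr : r.IsPath) (hba : b ≠ a) : (r.toSubgraph.deleteVerts {b}).Connected := by
  cases r with
  | nil => exact absurd rfl hba
  | @cons _ c _ h r' =>
    rw [Walk.isPath_def, Walk.support_cons, List.nodup_cons, ← Walk.isPath_def] at hr
    obtain ⟨hb_not, hr'⟩ := hr
    have hcb : c ≠ b := fun hcb => hb_not (hcb ▸ r'.start_mem_support)
    show ((G.subgraphOfAdj h ⊔ r'.toSubgraph).deleteVerts {b}).Connected
    rw [deleteVerts_sup]
    have h1 : ((G.subgraphOfAdj h).deleteVerts {b}).verts = {c} := by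
      ext x
      simp only [Subgraph.deleteVerts_verts, subgraphOfAdj_verts, Set.mem_diff,
        Set.mem_insert_iff, Set.mem_singleton_iff]
      constructor
      · rintro ⟨(rfl | rfl), hx⟩
        · exact absurd rfl hx
        · rfl
      · rintro rfl
        exact ⟨Or.inr rfl, hcb⟩
    have h2 : r'.toSubgraph.deleteVerts {b} = r'.toSubgraph := by
      apply deleteVerts_of_disjoint
      ext x
      simp only [Set.mem_inter_iff, Set.mem_singleton_iff, Set.mem_empty_iff_false,
        iff_false, not_and, Walk.mem_verts_toSubgraph]
      rintro hx rfl
      exact hb_not hx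
    rw [h2]
    apply Subgraph.connected_sup (connected_of_verts_singleton h1).preconnected r'.toSubgraph_connected.preconnected
    refine ⟨c, ?_⟩
    rw [Subgraph.verts_inf]
    refine ⟨by rw [h1]; exact rfl, ?_⟩
    simp only [Subgraph.deleteVerts_verts, Set.mem_diff, Walk.mem_verts_toSubgraph,
      Set.mem_singleton_iff]
    first
    | exact ⟨r'.start_mem_support, hcb⟩
    | exact r'.start_mem_support

/-- The subgraph of a cycle is 2-connected. -/
lemma cycle_isTwoConnectedSub {G : SimpleGraph V} {v : V} (p : G.Walk v v) (hp : p.IsCycle) :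
    IsTwoConnectedSub G p.toSubgraph := by
  constructor
  · -- at least 3 vertices
    cases p with
    | nil => exact absurd hp Walk.IsCycle.not_of_nil
    | @cons _ w _ h q =>
      rw [(Walk.cons_isCycle_iff q h)] at hp
      have hsupp : (Walk.cons h q).toSubgraph.verts = {y | y ∈ q.support} := by
        rw [Walk.verts_toSubgraph]
        ext y
        simp only [Set.mem_setOf_eq, Walk.support_cons, List.mem_cons]
        constructor
        · rintro (rfl | hy)
          · exact q.end_mem_support
          · exact hy
        · exact Or.inr
      rw [hsupp]
      have : {y | y ∈ q.support} = (q.support.toFinset : Set V) := by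
        simp [List.coe_toFinset]
      rw [this, Set.ncard_coe_finset, List.toFinset_card_of_nodup hp.1.support_nodup,
        Walk.length_support]
      have h3 := Walk.IsCircuit.three_le_length ((Walk.cons_isCycle_iff q h).mpr hp).isCircuit
      simp only [Walk.length_cons] at h3
      omega
  · intro x hx
    rw [Walk.mem_verts_toSubgraph] at hx
    rw [← Walk.toSubgraph_rotate p hx]
    have hq' : (p.rotate x hx).IsCycle := hp.rotate hx
    generalize hq : p.rotate x hx = q at hq'
    clear hq hp hx p
    cases q with
    | nil => exact absurd hq' Walk.IsCycle.not_of_nil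
    | @cons _ w _ h q =>
      rw [Walk.cons_isCycle_iff q h] at hq'
      show (((G.subgraphOfAdj h) ⊔ q.toSubgraph).deleteVerts {x}).Connected
      rw [deleteVerts_sup]
      have hwx : w ≠ x := h.ne'
      have h1 : ((G.subgraphOfAdj h).deleteVerts {x}).verts = {w} := by
        ext y
        simp only [Subgraph.deleteVerts_verts, subgraphOfAdj_verts, Set.mem_diff,
          Set.mem_insert_iff, Set.mem_singleton_iff]
        constructor
        · rintro ⟨(rfl | rfl), hy⟩
          · exact absurd rfl hy
          · rfl
        · rintro rfl
          exact ⟨Or.inr rfl, hwx⟩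
      have h2 : (q.toSubgraph.deleteVerts {x}).Connected := by
        have := path_deleteVerts_start_connected q.reverse hq'.1.reverse hwx.symm
        rwa [Walk.toSubgraph_reverse] at this
      apply Subgraph.connected_sup (connected_of_verts_singleton h1).preconnected h2.preconnected
      refine ⟨w, ?_⟩
      rw [Subgraph.verts_inf]
      refine ⟨by rw [h1]; exact rfl, ?_⟩
      simp only [Subgraph.deleteVerts_verts, Set.mem_diff, Walk.mem_verts_toSubgraph,
        Set.mem_singleton_iff]
      first
      | exact ⟨q.start_mem_support, hwx⟩
      | exact q.start_mem_support

instance {G : SimpleGraph V} : Finite G.Subgraph := by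
  have : Function.Injective (fun H : G.Subgraph => (H.verts, fun p : V × V => H.Adj p.1 p.2)) := by
    intro H K h
    simp only [Prod.mk.injEq] at h
    ext v w
    · exact Set.ext_iff.mp h.1 v
    · exact iff_of_eq (congrFun h.2 (v, w))
  exact Finite.of_injective _ this

/-- Every edge of `G` lies in some block. -/
lemma exists_block_of_adj {G : SimpleGraph V} {a b : V} (h : G.Adj a b) :
    ∃ B : G.Subgraph, IsBlock G B ∧ a ∈ B.verts ∧ b ∈ B.verts := by
  by_cases hbr : G.IsBridge s(a, b)
  · exact ⟨G.subgraphOfAdj h, Or.inr ⟨a, b, h, hbr, rfl⟩, by simp, by simp⟩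
  · rw [isBridge_iff_adj_and_forall_cycle_notMem (G.mem_edgeSet.mpr h)] at hbr
    push_neg at hbr
    obtain ⟨u, p, hp, he⟩ := hbr
    have hC : IsTwoConnectedSub G p.toSubgraph := cycle_isTwoConnectedSub p hp
    have haC : a ∈ p.toSubgraph.verts := by
      rw [Walk.mem_verts_toSubgraph]; exact p.fst_mem_support_of_mem_edges he
    have hbC : b ∈ p.toSubgraph.verts := by
      rw [Walk.mem_verts_toSubgraph]; exact p.snd_mem_support_of_mem_edges he
    obtain ⟨M, hM, hMmax⟩ := Set.Finite.exists_maximalFor id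
      {K : G.Subgraph | IsTwoConnectedSub G K ∧ p.toSubgraph ≤ K} (Set.toFinite _)
      ⟨p.toSubgraph, hC, le_rfl⟩
    refine ⟨M, Or.inl ⟨hM.1, fun B' hB' hle => ?_⟩,
      Subgraph.verts_mono hM.2 haC, Subgraph.verts_mono hM.2 hbC⟩
    exact le_antisymm (hMmax ⟨hB', le_trans hM.2 hle⟩ hle) hle

lemma block_verts_nonempty {G : SimpleGraph V} {B : G.Subgraph} (hB : IsBlock G B) :
    B.verts.Nonempty := by
  rcases hB with ⟨⟨h3, -⟩, -⟩ | ⟨u, v, h, -, rfl⟩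
  · rw [← Set.ncard_pos (Set.toFinite _)]; omega
  · exact ⟨u, by simp⟩

lemma block_connected {G : SimpleGraph V} {B : G.Subgraph} (hB : IsBlock G B) :
    B.Connected := by
  rcases hB with ⟨⟨h3, hdel⟩, -⟩ | ⟨u, v, h, -, rfl⟩
  · rw [Subgraph.connected_iff]
    refine ⟨?_, by rw [← Set.ncard_pos (Set.toFinite _)]; omega⟩
    constructor
    rintro ⟨x, hx⟩ ⟨y, hy⟩
    by_cases hxy : x = y
    · subst hxy; rfl
    · -- find a third vertex
      have : ∃ z ∈ B.verts, z ≠ x ∧ z ≠ y := by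
        by_contra hcon
        push_neg at hcon
        have hsub : B.verts ⊆ {x, y} := by
          intro z hz
          rcases eq_or_ne z x with rfl | hzx
          · exact Set.mem_insert _ _
          rcases eq_or_ne z y with rfl | hzy
          · exact Set.mem_insert_of_mem _ rfl
          · exact absurd (hcon z hz hzx) hzy
        have := Set.ncard_le_ncard hsub (Set.toFinite _)
        have h2 : ({x, y} : Set V).ncard ≤ 2 := by
          apply le_trans (Set.ncard_insert_le _ _)
          simp
        omega
      obtain ⟨z, hz, hzx, hzy⟩ := this
      have hconn := (hdel z hz).coe
      have hx' : x ∈ (B.deleteVerts {z}).verts := by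
        simp only [Subgraph.deleteVerts_verts, Set.mem_diff, Set.mem_singleton_iff]
        exact ⟨hx, fun hh => hzx hh.symm⟩
      have hy' : y ∈ (B.deleteVerts {z}).verts := by
        simp only [Subgraph.deleteVerts_verts, Set.mem_diff, Set.mem_singleton_iff]
        exact ⟨hy, fun hh => hzy hh.symm⟩
      have := hconn ⟨x, hx'⟩ ⟨y, hy'⟩
      have hmap := this.map (Subgraph.inclusion (Subgraph.deleteVerts_le))
      exact hmap
  · exact Subgraph.subgraphOfAdj_connected h

/-- crossing edge -/
lemma exists_crossing_adj {G : SimpleGraph V} {W : Set V} :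
    ∀ {a u : V}, G.Walk a u → a ∈ W → u ∉ W → ∃ x y, G.Adj x y ∧ x ∈ W ∧ y ∉ W := by
  intro a u p
  induction p with
  | nil => intro ha hu; exact absurd ha hu
  | @cons a c u h q ih =>
    intro ha hu
    by_cases hc : c ∈ W
    · exact ih hc hu
    · exact ⟨a, c, h, ha, hc⟩

lemma blockUnion_insert {G : SimpleGraph V} (C : Block G) (𝓐 : Set (Block G)) :
    blockUnion G (insert C 𝓐) = (C : G.Subgraph) ⊔ blockUnion G 𝓐 := by
  rw [blockUnion, blockUnion, iSup_insert]

lemma blockUnion_singleton {G : SimpleGraph V} (B : Block G) :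
    blockUnion G {B} = (B : G.Subgraph) := by
  simp [blockUnion]

lemma verts_subset_blockUnion {G : SimpleGraph V} {𝓐 : Set (Block G)} {B : Block G}
    (hB : B ∈ 𝓐) : (B : G.Subgraph).verts ⊆ (blockUnion G 𝓐).verts :=
  SimpleGraph.Subgraph.verts_mono (le_biSup _ hB)

/-- A proper connected nonempty block set can be extended by one block staying connected. -/
lemma exists_extend {G : SimpleGraph V} (hG : G.Connected) {𝓐 : Set (Block G)}
    (hne : 𝓐.Nonempty) (hconn : (blockUnion G 𝓐).Connected) (hproper : 𝓐 ≠ Set.univ) :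
    ∃ C ∉ 𝓐, (blockUnion G (insert C 𝓐)).Connected := by
  set W := (blockUnion G 𝓐).verts with hW
  have key : ∃ C : Block G, C ∉ 𝓐 ∧ ∃ x, x ∈ (C : G.Subgraph).verts ∩ W := by
    by_cases hWu : ∀ v : V, v ∈ W
    · obtain ⟨C, hC⟩ := (Set.ne_univ_iff_exists_notMem 𝓐).mp hproper
      obtain ⟨x, hx⟩ := block_verts_nonempty C.2
      exact ⟨C, hC, x, hx, hWu x⟩
    · push_neg at hWu
      obtain ⟨u, hu⟩ := hWu
      obtain ⟨B₀, hB₀⟩ := hne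
      obtain ⟨a, ha⟩ := block_verts_nonempty B₀.2
      have haW : a ∈ W := verts_subset_blockUnion hB₀ ha
      obtain ⟨x, y, hxy, hxW, hyW⟩ :=
        exists_crossing_adj ((hG.preconnected a u).some) haW hu
      obtain ⟨M, hM, hxM, hyM⟩ := exists_block_of_adj hxy
      refine ⟨⟨M, hM⟩, fun hmem => ?_, x, hxM, hxW⟩
      exact hyW (verts_subset_blockUnion hmem hyM)
  obtain ⟨C, hC, x, hx⟩ := key
  refine ⟨C, hC, ?_⟩
  rw [blockUnion_insert]
  apply Subgraph.connected_sup (block_connected C.2).preconnected hconn.preconnected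
  exact ⟨x, by rwa [SimpleGraph.Subgraph.verts_inf]⟩

/-- For every `C ≠ B` there is a connected block set containing `B`, avoiding `C`,
which stays connected when `C` is inserted. -/
lemma exists_pair {G : SimpleGraph V} (hG : G.Connected) (B C : Block G) (hne : C ≠ B) :
    ∃ 𝓐 : Set (Block G), B ∈ 𝓐 ∧ C ∉ 𝓐 ∧ (blockUnion G 𝓐).Connected ∧
      (blockUnion G (insert C 𝓐)).Connected := by
  obtain ⟨𝓐, h𝓐, hmax⟩ := Set.Finite.exists_maximalFor id
    {𝓐 : Set (Block G) | B ∈ 𝓐 ∧ C ∉ 𝓐 ∧ (blockUnion G 𝓐).Connected} (Set.toFinite _)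
    ⟨{B}, rfl, by simpa using hne, by rw [blockUnion_singleton]; exact block_connected B.2⟩
  obtain ⟨hB𝓐, hC𝓐, hconn⟩ := h𝓐
  have hproper : 𝓐 ≠ Set.univ := fun h => hC𝓐 (h ▸ Set.mem_univ C)
  obtain ⟨C', hC', hconn'⟩ := exists_extend hG ⟨B, hB𝓐⟩ hconn hproper
  rcases eq_or_ne C' C with rfl | hne'
  · exact ⟨𝓐, hB𝓐, hC𝓐, hconn, hconn'⟩
  · exfalso
    have : insert C' 𝓐 ∈ {𝓐 : Set (Block G) | B ∈ 𝓐 ∧ C ∉ 𝓐 ∧ (blockUnion G 𝓐).Connected} :=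
      ⟨Set.mem_insert_of_mem _ hB𝓐, by
        simp only [Set.mem_insert_iff]
        rintro (rfl | h)
        · exact hne' rfl
        · exact hC𝓐 h, hconn'⟩
    have heq := le_antisymm (Set.subset_insert C' 𝓐) (hmax this (Set.subset_insert C' 𝓐))
    exact hC' (by rw [show 𝓐 = insert C' 𝓐 from heq]; exact Set.mem_insert _ _)

/-- for every block `B`, the inequality `x_B ≤ 1` defines a facet of `CBP(G)`. -/
theorem cbp_facet_le_one (G : SimpleGraph V) (hG : G.Connected) (B : Block G) :
    IsFaceOf (CBP G) {x ∈ CBP G | x B = 1} ∧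
      polyDim {x ∈ CBP G | x B = 1} = Nat.card (Block G) - 1 := by
  letI : Fintype (Block G) := Fintype.ofFinite _
  letI : DecidableEq (Block G) := Classical.decEq _
  have hle : ∀ x ∈ CBP G, x B ≤ 1 := by
    intro x hx
    have hsub : CBP G ⊆ {x : Block G → ℝ | x B ≤ 1} := by
      apply convexHull_min
      · rintro y ⟨𝓐, -, rfl⟩
        by_cases h : B ∈ 𝓐 <;> simp [incVec, Set.indicator_apply, h]
      · intro a ha b hb s t hs ht hst
        have : (s • a + t • b) B = s * a B + t * b B := rfl
        simp only [Set.mem_setOf_eq] at ha hb ⊢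
        rw [this]
        nlinarith
    exact hsub hx
  have hmem : ∀ 𝓐 : Set (Block G), (blockUnion G 𝓐).Connected → B ∈ 𝓐 →
      incVec G 𝓐 ∈ {x ∈ CBP G | x B = 1} := by
    intro 𝓐 hc hB
    refine ⟨subset_convexHull ℝ _ ⟨𝓐, Or.inr hc, rfl⟩, ?_⟩
    simp [incVec, Set.indicator_of_mem hB]
  constructor
  · refine ⟨fun x hx => hx.1, ?_, ?_⟩
    · have heq : {x ∈ CBP G | x B = 1} = CBP G ∩ {x : Block G → ℝ | x B = 1} := rfl
      rw [heq]
      refine (convex_convexHull ℝ _).inter ?_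
      intro a ha b hb s t hs ht hst
      simp only [Set.mem_setOf_eq] at ha hb ⊢
      have : (s • a + t • b) B = s * a B + t * b B := rfl
      rw [this, ha, hb]
      ring_nf
      linarith
    · intro x hx y hy t ht0 ht1 hz
      obtain ⟨-, hzB⟩ := hz
      have hcalc : (t • x + (1 - t) • y) B = t * x B + (1 - t) * y B := rfl
      rw [hcalc] at hzB
      have hx1 : x B = 1 := by nlinarith [hle x hx, hle y hy]
      have hy1 : y B = 1 := by nlinarith [hle x hx, hle y hy]
      exact ⟨⟨hx, hx1⟩, ⟨hy, hy1⟩⟩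
  · -- dimension
    set F := {x ∈ CBP G | x B = 1} with hF
    set φ : (Block G → ℝ) →ₗ[ℝ] ℝ := LinearMap.proj B with hφ
    have hupper : (affineSpan ℝ F).direction ≤ LinearMap.ker φ := by
      rw [direction_affineSpan]
      rw [vectorSpan_def]
      rw [Submodule.span_le]
      rintro v ⟨x, hx, y, hy, rfl⟩
      rw [SetLike.mem_coe, LinearMap.mem_ker]
      have : φ (x -ᵥ y) = x B - y B := rfl
      rw [this, hx.2, hy.2, sub_self]
    have hkerrank : Module.finrank ℝ (LinearMap.ker φ) = Fintype.card (Block G) - 1 := by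
      have h1 := LinearMap.finrank_range_add_finrank_ker φ
      have hsurj : LinearMap.range φ = ⊤ :=
        LinearMap.range_eq_top.mpr (fun r => ⟨fun _ => r, rfl⟩)
      rw [hsurj, finrank_top] at h1
      rw [Module.finrank_pi] at h1
      have : Module.finrank ℝ ℝ = 1 := Module.finrank_self ℝ
      omega
    have hub : Module.finrank ℝ (affineSpan ℝ F).direction ≤ Fintype.card (Block G) - 1 :=
      hkerrank ▸ Submodule.finrank_mono hupper
    have hsingle : ∀ C : Block G, C ≠ B → Pi.single C (1:ℝ) ∈ (affineSpan ℝ F).direction := by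
      intro C hC
      obtain ⟨𝓐, hB𝓐, hC𝓐, hconn, hconn'⟩ := exists_pair hG B C hC
      have h1 := hmem 𝓐 hconn hB𝓐
      have h2 := hmem (insert C 𝓐) hconn' (Set.mem_insert_of_mem _ hB𝓐)
      have hdiff : incVec G (insert C 𝓐) - incVec G 𝓐 = Pi.single C 1 := by
        funext D
        simp only [Pi.sub_apply, incVec]
        by_cases hD : D = C
        · subst hD
          rw [Set.indicator_of_mem (Set.mem_insert _ _), Set.indicator_of_notMem hC𝓐,
            Pi.single_eq_same]
          simp
        · rw [Pi.single_eq_of_ne hD]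
          by_cases hD𝓐 : D ∈ 𝓐
          · rw [Set.indicator_of_mem (Set.mem_insert_of_mem _ hD𝓐), Set.indicator_of_mem hD𝓐,
              sub_self]
          · rw [Set.indicator_of_notMem hD𝓐, Set.indicator_of_notMem (by
              simp only [Set.mem_insert_iff]
              rintro (h | h)
              · exact hD h
              · exact hD𝓐 h), sub_self]
      rw [direction_affineSpan]
      have := vsub_mem_vectorSpan ℝ h2 h1
      rwa [show incVec G (insert C 𝓐) -ᵥ incVec G 𝓐 = Pi.single C 1 from hdiff] at this
    have li : LinearIndependent ℝ
        (fun C : {C : Block G // C ≠ B} => (Pi.single (C : Block G) (1:ℝ) : Block G → ℝ)) := by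
      have h := (Pi.basisFun ℝ (Block G)).linearIndependent
      have h2 := h.comp (Subtype.val : {C : Block G // C ≠ B} → Block G) Subtype.val_injective
      have heq : (fun C : {C : Block G // C ≠ B} => (Pi.single (C : Block G) (1:ℝ) : Block G → ℝ)) =
          (⇑(Pi.basisFun ℝ (Block G)) ∘ Subtype.val) := by
        funext C
        rw [Function.comp_apply, Pi.basisFun_apply]
      rw [heq]
      exact h2
    have hspan_le : Submodule.span ℝ
        (Set.range fun C : {C : Block G // C ≠ B} => (Pi.single (C : Block G) (1:ℝ) : Block G → ℝ)) ≤
        (affineSpan ℝ F).direction := by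
      rw [Submodule.span_le]
      rintro _ ⟨C, rfl⟩
      exact hsingle C C.2
    have hcard : Fintype.card {C : Block G // C ≠ B} = Fintype.card (Block G) - 1 := by
      have h := Fintype.card_subtype_compl (fun C : Block G => C = B)
      rw [Fintype.card_subtype_eq] at h
      exact h
    have hlb : Fintype.card (Block G) - 1 ≤ Module.finrank ℝ (affineSpan ℝ F).direction := by
      have h := finrank_span_eq_card li
      rw [hcard] at h
      exact h ▸ Submodule.finrank_mono hspan_le
    have : polyDim F = Fintype.card (Block G) - 1 := le_antisymm hub hlb
    rw [this, Nat.card_eq_fintype_card]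


end ConnectedBlocksPaper
end
end

section
/- Let G be a finite connected graph with set of blocks 𝓑, let v be a cut vertex of G, and let (𝓘, α) be an independent blocks inequality. Then there exists a unique H ∈ 𝒦_v with ∑_{B ∈ 𝓑[H]} α_B = 1, and for every other H' ∈ 𝒦_v ∖ {H} one has ∑_{B ∈ 𝓑[H']} α_B = 0. -/
open Set

noncomputable section

namespace ConnectedBlocksPaper

variable {V : Type} [Fintype V] [DecidableEq V]

variable {G : SimpleGraph V}

instance : Finite (G.Subgraph) := by
  refine Finite.of_injective (fun H => (H.verts, H.Adj)) ?_
  intro H K h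
  simp only [Prod.mk.injEq] at h
  exact SimpleGraph.Subgraph.ext h.1 h.2

/-- delete a vertex not in the subgraph -/
lemma deleteVerts_eq_self {B : G.Subgraph} {v : V} (hv : v ∉ B.verts) :
    B.deleteVerts {v} = B := by
  ext x y
  · simp only [SimpleGraph.Subgraph.deleteVerts_verts, Set.mem_diff, Set.mem_singleton_iff,
      and_iff_left_iff_imp]
    rintro hx rfl; exact hv hx
  · simp only [SimpleGraph.Subgraph.deleteVerts_adj, Set.mem_singleton_iff]
    constructor
    · tauto
    · intro h
      refine ⟨B.edge_vert h, ?_, B.edge_vert h.symm, ?_, h⟩ <;> rintro rfl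
      · exact hv (B.edge_vert h)
      · exact hv (B.edge_vert h.symm)

lemma twoConn_connected {B : G.Subgraph} (h : IsTwoConnectedSub G B) : B.Connected := by
  rw [SimpleGraph.Subgraph.connected_iff]
  have h3 := h.1
  have hne : B.verts.Nonempty := by
    rw [← Set.ncard_pos]; omega
  refine ⟨⟨?_⟩, hne⟩
  intro x y
  by_cases hxy : (x : V) = y
  · exact Subtype.ext hxy ▸ SimpleGraph.Reachable.refl _
  · have hdiff : (B.verts \ {(x : V), (y : V)}).Nonempty := by
      rw [Set.nonempty_iff_ne_empty]
      intro hemp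
      have h1 : B.verts ⊆ {(x : V), (y : V)} := by
        intro z hz
        by_contra hz'
        exact (Set.eq_empty_iff_forall_notMem.1 hemp z) ⟨hz, hz'⟩
      have := Set.ncard_le_ncard h1 (Set.toFinite _)
      have h2 : ({(x : V), (y : V)} : Set V).ncard ≤ 2 := Set.ncard_insert_le _ _ |>.trans (by simp)
      omega
    obtain ⟨w, hw, hw'⟩ := hdiff
    have hconn := h.2 w hw
    have hx' : (x : V) ∈ (B.deleteVerts {w}).verts := by
      simp only [SimpleGraph.Subgraph.deleteVerts_verts, Set.mem_diff, Set.mem_singleton_iff]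
      exact ⟨x.2, fun hh => hw' (by simp [← hh])⟩
    have hy' : (y : V) ∈ (B.deleteVerts {w}).verts := by
      simp only [SimpleGraph.Subgraph.deleteVerts_verts, Set.mem_diff, Set.mem_singleton_iff]
      exact ⟨y.2, fun hh => hw' (by simp [← hh])⟩
    have hr := hconn.coe ⟨x, hx'⟩ ⟨y, hy'⟩
    have := hr.map (SimpleGraph.Subgraph.inclusion (SimpleGraph.Subgraph.deleteVerts_le))
    convert this using 2 <;> rfl

lemma block_connected_s7 (B : Block G) : (B : G.Subgraph).Connected := by
  obtain ⟨B, h | ⟨u, w, h, hbr, rfl⟩⟩ := B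
  · exact twoConn_connected h.1
  · exact SimpleGraph.Subgraph.subgraphOfAdj_connected h

lemma block_exists_ne (B : Block G) (v : V) : ∃ x ∈ (B : G.Subgraph).verts, x ≠ v := by
  obtain ⟨B, h | ⟨u, w, h, hbr, rfl⟩⟩ := B
  · by_contra hx
    push_neg at hx
    have h3 := h.1.1
    have : B.verts ⊆ {v} := fun z hz => hx z hz
    have := Set.ncard_le_ncard this (Set.toFinite _)
    rw [Set.ncard_singleton] at this
    omega
  · simp only [SimpleGraph.subgraphOfAdj_verts]
    by_cases hu : u = v
    · exact ⟨w, by simp, fun hw => h.ne (hu ▸ hw ▸ rfl)⟩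
    · exact ⟨u, by simp, hu⟩

lemma subgraphOfAdj_del_connected {a b : V} (hab : G.Adj a b) :
    ((G.subgraphOfAdj hab).deleteVerts {a}).Connected := by
  have : (G.subgraphOfAdj hab).deleteVerts {a} = G.singletonSubgraph b := by
    ext x y
    · simp only [SimpleGraph.Subgraph.deleteVerts_verts, SimpleGraph.subgraphOfAdj_verts,
        SimpleGraph.singletonSubgraph_verts, Set.mem_diff, Set.mem_insert_iff,
        Set.mem_singleton_iff]
      constructor
      · rintro ⟨rfl | rfl, hx⟩ <;> tauto
      · rintro rfl; exact ⟨Or.inr rfl, fun hh => hab.ne' (hh ▸ rfl)⟩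
    · simp only [SimpleGraph.Subgraph.deleteVerts_adj, SimpleGraph.subgraphOfAdj_verts,
        SimpleGraph.subgraphOfAdj_adj, SimpleGraph.singletonSubgraph_adj,
        Set.mem_singleton_iff, Pi.bot_apply, Prop.bot_eq_false, iff_false]
      rintro ⟨-, hx, -, hy, hadj⟩
      rw [Sym2.eq_iff] at hadj
      tauto
  rw [this]
  exact SimpleGraph.Subgraph.singletonSubgraph_connected

lemma subgraphOfAdj_symm {a b : V} (hab : G.Adj a b) :
    G.subgraphOfAdj hab = G.subgraphOfAdj hab.symm := by
  ext x y
  · simp [Set.pair_comm]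
  · simp [Sym2.eq_swap]

lemma block_del_connected (B : Block G) (v : V) :
    ((B : G.Subgraph).deleteVerts {v}).Connected := by
  obtain ⟨B, hB⟩ := B
  show (B.deleteVerts {v}).Connected
  by_cases hv : v ∈ B.verts
  · rcases hB with h | ⟨u, w, h, hbr, rfl⟩
    · exact h.1.2 v hv
    · simp only [SimpleGraph.subgraphOfAdj_verts, Set.mem_insert_iff,
        Set.mem_singleton_iff] at hv
      rcases hv with rfl | rfl
      · exact subgraphOfAdj_del_connected h
      · rw [subgraphOfAdj_symm h]
        exact subgraphOfAdj_del_connected h.symm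
  · rw [deleteVerts_eq_self hv]
    exact block_connected_s7 ⟨B, hB⟩


/-- Hom from a subgraph-minus-v into the induced graph on `{v}ᶜ`. -/
def delHom (B : G.Subgraph) (v : V) :
    (B.deleteVerts {v}).coe →g G.induce ({v}ᶜ : Set V) where
  toFun a := ⟨a.1, by
    have := a.2
    simp only [SimpleGraph.Subgraph.deleteVerts_verts, Set.mem_diff,
      Set.mem_singleton_iff] at this
    simpa using this.2⟩
  map_rel' := by
    intro a b hab
    simp only [SimpleGraph.Subgraph.coe_adj] at hab
    simp only [SimpleGraph.comap_adj, Function.Embedding.coe_subtype]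
    exact (B.deleteVerts {v}).adj_sub hab

/-- The connected component of `G - v` containing (most of) the block `B`. -/
def compOf (v : V) (B : Block G) : (G.induce ({v}ᶜ : Set V)).ConnectedComponent :=
  SimpleGraph.connectedComponentMk _ ⟨(block_exists_ne B v).choose, by
    simpa using (block_exists_ne B v).choose_spec.2⟩

lemma mk_eq_compOf {v : V} (B : Block G) {y : V} (hy : y ∈ (B : G.Subgraph).verts)
    (hy' : y ∈ ({v}ᶜ : Set V)) :
    SimpleGraph.connectedComponentMk _ ⟨y, hy'⟩ = compOf v B := by
  obtain ⟨hx, hxv⟩ := (block_exists_ne B v).choose_spec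
  set x := (block_exists_ne B v).choose
  have hyv : y ≠ v := by simpa using hy'
  have hyd : y ∈ ((B : G.Subgraph).deleteVerts {v}).verts := by
    simp only [SimpleGraph.Subgraph.deleteVerts_verts, Set.mem_diff, Set.mem_singleton_iff]
    exact ⟨hy, hyv⟩
  have hxd : x ∈ ((B : G.Subgraph).deleteVerts {v}).verts := by
    simp only [SimpleGraph.Subgraph.deleteVerts_verts, Set.mem_diff, Set.mem_singleton_iff]
    exact ⟨hx, hxv⟩
  have hr := (block_del_connected B v).coe.preconnected ⟨y, hyd⟩ ⟨x, hxd⟩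
  have := hr.map (delHom (B : G.Subgraph) v)
  exact SimpleGraph.ConnectedComponent.sound this

/-- The element of `𝒦_v` corresponding to a component `C`. -/
def Hsub (G : SimpleGraph V) (v : V) (C : (G.induce ({v}ᶜ : Set V)).ConnectedComponent) :
    G.Subgraph :=
  (⊤ : G.Subgraph).induce (Subtype.val '' C.supp ∪ {v})

lemma verts_subset_of_compOf {v : V} (B : Block G)
    {C : (G.induce ({v}ᶜ : Set V)).ConnectedComponent} (h : compOf v B = C) :
    (B : G.Subgraph).verts ⊆ Subtype.val '' C.supp ∪ {v} := by
  intro y hy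
  by_cases hyv : y = v
  · exact Or.inr hyv
  · left
    have hy' : y ∈ ({v}ᶜ : Set V) := by simpa using hyv
    refine ⟨⟨y, hy'⟩, ?_, rfl⟩
    rw [SimpleGraph.ConnectedComponent.mem_supp_iff, mk_eq_compOf B hy hy', h]

lemma le_Hsub_iff {v : V} (B : Block G)
    (C : (G.induce ({v}ᶜ : Set V)).ConnectedComponent) :
    (B : G.Subgraph) ≤ Hsub G v C ↔ compOf v B = C := by
  constructor
  · intro hle
    obtain ⟨hx, hxv⟩ := (block_exists_ne B v).choose_spec
    set x := (block_exists_ne B v).choose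
    have : x ∈ (Hsub G v C).verts := hle.1 hx
    simp only [Hsub, SimpleGraph.Subgraph.induce_verts, Set.mem_union,
      Set.mem_singleton_iff] at this
    rcases this with ⟨a, ha, heq⟩ | h'
    · rw [SimpleGraph.ConnectedComponent.mem_supp_iff] at ha
      rw [← ha, ← mk_eq_compOf B (heq ▸ hx) a.2]
    · exact absurd h' hxv
  · intro h
    have hverts := verts_subset_of_compOf B h
    constructor
    · exact hverts
    · intro a b hab
      simp only [Hsub, SimpleGraph.Subgraph.induce_adj, SimpleGraph.Subgraph.top_adj]
      exact ⟨hverts ((B : G.Subgraph).edge_vert hab),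
        hverts ((B : G.Subgraph).edge_vert hab.symm), (B : G.Subgraph).adj_sub hab⟩

lemma Hsub_mem_Kv (G : SimpleGraph V) (v : V)
    (C : (G.induce ({v}ᶜ : Set V)).ConnectedComponent) : Hsub G v C ∈ Kv G v :=
  ⟨C, rfl⟩

lemma blocksOf_Hsub (G : SimpleGraph V) (v : V)
    (C : (G.induce ({v}ᶜ : Set V)).ConnectedComponent) :
    blocksOf G (Hsub G v C) = {B : Block G | compOf v B = C} := by
  ext B
  exact le_Hsub_iff B C


lemma cycle_del_connected {x : V} (q : G.Walk x x) (hq : q.IsCycle) :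
    (q.toSubgraph.deleteVerts {x}).Connected := by
  cases q with
  | nil => exact absurd hq SimpleGraph.Walk.IsCycle.not_of_nil
  | cons h r =>
    rename_i b
    obtain ⟨hpath, hedge⟩ := (SimpleGraph.Walk.cons_isCycle_iff r h).mp hq
    have hxb : x ≠ b := h.ne
    obtain ⟨z, h', r₂, hrr⟩ := SimpleGraph.Walk.exists_eq_cons_of_ne hxb r.reverse
    have hrrpath := hpath.reverse
    rw [hrr, SimpleGraph.Walk.cons_isPath_iff] at hrrpath
    obtain ⟨hr₂path, hxnot⟩ := hrrpath
    have hrsub : r.toSubgraph = G.subgraphOfAdj h' ⊔ r₂.toSubgraph := by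
      rw [← SimpleGraph.Walk.toSubgraph_reverse r, hrr]
      rfl
    have hmemr : ∀ a : V, a ∈ r.support ↔ a = x ∨ a ∈ r₂.support := by
      intro a
      rw [show r.support = r.reverse.support.reverse by
        rw [SimpleGraph.Walk.support_reverse, List.reverse_reverse]]
      rw [List.mem_reverse, hrr, SimpleGraph.Walk.support_cons]
      simp
    have hbz : b ∈ r₂.support := SimpleGraph.Walk.end_mem_support r₂
    have hEq : ((SimpleGraph.Walk.cons h r).toSubgraph).deleteVerts {x} = r₂.toSubgraph := by
      have hsup : (SimpleGraph.Walk.cons h r).toSubgraph = G.subgraphOfAdj h ⊔ r.toSubgraph := rfl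
      ext a c
      · simp only [SimpleGraph.Subgraph.deleteVerts_verts, hsup,
          SimpleGraph.Subgraph.verts_sup, SimpleGraph.subgraphOfAdj_verts,
          SimpleGraph.Walk.verts_toSubgraph, Set.mem_diff, Set.mem_union, Set.mem_insert_iff,
          Set.mem_singleton_iff, Set.mem_setOf_eq, hmemr]
        constructor
        · rintro ⟨(rfl | rfl) | (rfl | ha), hax⟩
          · exact absurd rfl hax
          · exact hbz
          · exact absurd rfl hax
          · exact ha
        · intro ha
          have hax : a ≠ x := fun hh => hxnot (hh ▸ ha)
          exact ⟨Or.inr (Or.inr ha), hax⟩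
      · simp only [SimpleGraph.Subgraph.deleteVerts_adj, hsup, SimpleGraph.Subgraph.sup_adj,
          SimpleGraph.subgraphOfAdj_adj, Set.mem_singleton_iff, hrsub]
        constructor
        · rintro ⟨-, hax, -, hcx, (hsym | hsym | hadj)⟩
          · rw [Sym2.eq_iff] at hsym
            rcases hsym with ⟨rfl, rfl⟩ | ⟨rfl, rfl⟩
            · exact absurd rfl hax
            · exact absurd rfl hcx
          · rw [Sym2.eq_iff] at hsym
            rcases hsym with ⟨rfl, rfl⟩ | ⟨rfl, rfl⟩
            · exact absurd rfl hax
            · exact absurd rfl hcx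
          · exact hadj
        · intro hadj
          have ha := r₂.toSubgraph.edge_vert hadj
          have hc := r₂.toSubgraph.edge_vert hadj.symm
          rw [SimpleGraph.Walk.mem_verts_toSubgraph] at ha hc
          refine ⟨?_, ?_, ?_, ?_, Or.inr (Or.inr hadj)⟩
          · simp only [SimpleGraph.Subgraph.verts_sup, SimpleGraph.subgraphOfAdj_verts,
              SimpleGraph.Walk.verts_toSubgraph, Set.mem_union, Set.mem_setOf_eq, hmemr]
            exact Or.inr (Or.inr ha)
          · exact fun hh => hxnot (hh ▸ ha)
          · simp only [SimpleGraph.Subgraph.verts_sup, SimpleGraph.subgraphOfAdj_verts,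
              SimpleGraph.Walk.verts_toSubgraph, Set.mem_union, Set.mem_setOf_eq, hmemr]
            exact Or.inr (Or.inr hc)
          · exact fun hh => hxnot (hh ▸ hc)
    rw [hEq]
    exact r₂.toSubgraph_connected

lemma cycle_twoConn {u : V} (p : G.Walk u u) (hp : p.IsCycle) :
    IsTwoConnectedSub G p.toSubgraph := by
  constructor
  · have hv : p.toSubgraph.verts = ↑p.support.toFinset := by
      ext a
      simp [SimpleGraph.Walk.mem_verts_toSubgraph]
    rw [hv, Set.ncard_coe_finset]
    cases p with
    | nil => exact absurd hp SimpleGraph.Walk.IsCycle.not_of_nil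
    | cons h r =>
      rename_i b
      have hlen := hp.three_le_length
      have hnodup : r.support.Nodup := ((SimpleGraph.Walk.cons_isCycle_iff r h).mp hp).1.2
      have : (SimpleGraph.Walk.cons h r).support.toFinset = r.support.toFinset := by
        rw [SimpleGraph.Walk.support_cons, List.toFinset_cons]
        exact Finset.insert_eq_self.mpr (by
          rw [List.mem_toFinset]; exact r.end_mem_support)
      rw [this, List.toFinset_card_of_nodup hnodup, SimpleGraph.Walk.length_support]
      simp only [SimpleGraph.Walk.length_cons] at hlen
      omega
  · intro w hw
    rw [SimpleGraph.Walk.mem_verts_toSubgraph] at hw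
    rw [← SimpleGraph.Walk.toSubgraph_rotate p hw]
    exact cycle_del_connected _ (hp.rotate hw)

lemma exists_block_adj {x y : V} (h : G.Adj x y) :
    ∃ B : Block G, (B : G.Subgraph).Adj x y := by
  by_cases hbr : G.IsBridge s(x, y)
  · exact ⟨⟨G.subgraphOfAdj h, Or.inr ⟨x, y, h, hbr, rfl⟩⟩, by simp⟩
  · rw [SimpleGraph.isBridge_iff_mem_and_forall_cycle_notMem] at hbr
    on_goal 2 => exact (SimpleGraph.mem_edgeSet G).mpr h
    push_neg at hbr
    obtain ⟨u, p, hcyc, he⟩ := hbr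
    have h2c := cycle_twoConn p hcyc
    obtain ⟨M, hM, hmax⟩ := Set.Finite.exists_maximalFor id
      {B' : G.Subgraph | IsTwoConnectedSub G B' ∧ p.toSubgraph ≤ B'} (Set.toFinite _)
      ⟨p.toSubgraph, h2c, le_rfl⟩
    have hpadj : p.toSubgraph.Adj x y := by
      rw [← SimpleGraph.Subgraph.mem_edgeSet, SimpleGraph.Walk.mem_edges_toSubgraph]
      exact he
    refine ⟨⟨M, Or.inl ⟨hM.1, ?_⟩⟩, hM.2.2 hpadj⟩
    intro B' h2 hle
    exact le_antisymm (@hmax B' ⟨h2, hM.2.trans hle⟩ hle) hle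

def SReach (U : G.Subgraph) (a b : V) : Prop :=
  ∃ (ha : a ∈ U.verts) (hb : b ∈ U.verts), U.coe.Reachable ⟨a, ha⟩ ⟨b, hb⟩

lemma SReach.trans {U : G.Subgraph} {a b c : V} (h1 : SReach U a b) (h2 : SReach U b c) :
    SReach U a c := by
  obtain ⟨ha, hb, hr⟩ := h1
  obtain ⟨hb', hc, hr'⟩ := h2
  exact ⟨ha, hc, hr.trans hr'⟩

lemma SReach.symm {U : G.Subgraph} {a b : V} (h1 : SReach U a b) : SReach U b a := by
  obtain ⟨ha, hb, hr⟩ := h1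
  exact ⟨hb, ha, hr.symm⟩

lemma sreach_of_adj {U : G.Subgraph} {a b : V} (h : U.Adj a b) : SReach U a b :=
  ⟨U.edge_vert h, U.edge_vert h.symm,
    SimpleGraph.Adj.reachable (by rw [SimpleGraph.Subgraph.coe_adj]; exact h)⟩

lemma SReach.mono {U W : G.Subgraph} {a b : V} (hle : U ≤ W) (h : SReach U a b) :
    SReach W a b := by
  obtain ⟨ha, hb, hr⟩ := h
  exact ⟨hle.1 ha, hle.1 hb, hr.map (SimpleGraph.Subgraph.inclusion hle)⟩

lemma sreach_of_connected {B : G.Subgraph} {a b : V} (h : B.Connected)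
    (ha : a ∈ B.verts) (hb : b ∈ B.verts) : SReach B a b :=
  ⟨ha, hb, h.coe.preconnected _ _⟩

lemma mem_blockUnion_verts {𝓐 : Set (Block G)} {a : V} :
    a ∈ (blockUnion G 𝓐).verts ↔ ∃ B ∈ 𝓐, a ∈ (B : G.Subgraph).verts := by
  simp [blockUnion, SimpleGraph.Subgraph.verts_iSup]

lemma le_blockUnion {𝓐 : Set (Block G)} {B : Block G} (hB : B ∈ 𝓐) :
    (B : G.Subgraph) ≤ blockUnion G 𝓐 :=
  le_iSup₂ (f := fun (B : Block G) (_ : B ∈ 𝓐) => (B : G.Subgraph)) B hB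

lemma sreach_v_of_mem_comp (hG : G.Preconnected) (v : V) (𝓐 : Set (Block G))
    {C : (G.induce ({v}ᶜ : Set V)).ConnectedComponent}
    (h𝓐 : ∀ B : Block G, compOf v B = C → B ∈ 𝓐)
    {u : V} (hu : u ∈ Subtype.val '' C.supp) :
    SReach (blockUnion G 𝓐) u v := by
  suffices H : ∀ (n : ℕ) (w : V) (p : G.Walk w v), p.length = n →
      w ∈ Subtype.val '' C.supp → SReach (blockUnion G 𝓐) w v by
    obtain ⟨p⟩ := hG u v
    exact H p.length u p rfl hu
  intro n
  induction n using Nat.strong_induction_on with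
  | _ n ih =>
    intro w p hlen hw
    cases p with
    | nil =>
      obtain ⟨a, -, ha⟩ := hw
      have h2 := a.2
      rw [ha] at h2
      simp at h2
    | cons h q =>
      rename_i b
      obtain ⟨a, has, ha⟩ := hw
      have hwv : w ≠ v := by
        intro hh
        apply (show (a : V) ∈ ({v}ᶜ : Set V) from a.2)
        rw [ha, hh]
        rfl
      obtain ⟨Be, hBe⟩ := exists_block_adj h
      have hcomp : compOf v Be = C := by
        rw [← mk_eq_compOf Be (Be.1.edge_vert hBe) (by simpa using hwv)]
        rw [SimpleGraph.ConnectedComponent.mem_supp_iff] at has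
        rw [← has]
        congr 1
        exact Subtype.ext ha.symm
      have step : SReach (blockUnion G 𝓐) w b :=
        sreach_of_adj ((le_blockUnion (h𝓐 Be hcomp)).2 hBe)
      by_cases hbv : b = v
      · subst hbv; exact step
      · refine step.trans (ih q.length ?_ b q rfl ?_)
        · rw [← hlen, SimpleGraph.Walk.length_cons]; omega
        · refine ⟨⟨b, by simpa using hbv⟩, ?_, rfl⟩
          rw [SimpleGraph.ConnectedComponent.mem_supp_iff]
          rw [SimpleGraph.ConnectedComponent.mem_supp_iff] at has
          rw [← has]
          apply SimpleGraph.ConnectedComponent.sound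
          apply SimpleGraph.Adj.reachable
          show (G.induce ({v}ᶜ : Set V)).Adj ⟨b, by simpa using hbv⟩ a
          simp only [SimpleGraph.comap_adj, Function.Embedding.coe_subtype]
          rw [ha]
          exact h.symm

lemma connBlocks_of_comp_closed (hG : G.Preconnected) (v : V) (𝓐 : Set (Block G))
    (hcl : ∀ B B' : Block G, B ∈ 𝓐 → compOf v B' = compOf v B → B' ∈ 𝓐) :
    ConnBlocks G 𝓐 := by
  rcases Set.eq_empty_or_nonempty 𝓐 with rfl | ⟨B₀, hB₀⟩
  · exact Or.inl rfl
  right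
  have key : ∀ a ∈ (blockUnion G 𝓐).verts, SReach (blockUnion G 𝓐) a v := by
    intro a ha
    rw [mem_blockUnion_verts] at ha
    obtain ⟨B, hB, haB⟩ := ha
    by_cases hv : v ∈ (B : G.Subgraph).verts
    · exact (sreach_of_connected (block_connected_s7 B) haB hv).mono (le_blockUnion hB)
    · have hav : a ≠ v := fun hh => hv (hh ▸ haB)
      have ha' : a ∈ Subtype.val '' (compOf v B).supp := by
        refine ⟨⟨a, by simpa using hav⟩, ?_, rfl⟩
        rw [SimpleGraph.ConnectedComponent.mem_supp_iff]
        exact mk_eq_compOf B haB _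
      exact sreach_v_of_mem_comp hG v 𝓐 (fun B' hB' => hcl B B' hB hB') ha'
  rw [SimpleGraph.Subgraph.connected_iff]
  have hne : (blockUnion G 𝓐).verts.Nonempty := by
    obtain ⟨a, haB⟩ := (block_connected_s7 B₀).nonempty
    exact ⟨a, (le_blockUnion hB₀).1 haB⟩
  refine ⟨⟨?_⟩, hne⟩
  rintro ⟨a, ha⟩ ⟨b, hb⟩
  obtain ⟨_, hv1, r1⟩ := key a ha
  obtain ⟨_, hv2, r2⟩ := key b hb
  exact r1.trans r2.symm

lemma subset_blockClosure (𝓘 : Set (Block G)) : 𝓘 ⊆ blockClosure G 𝓘 := by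
  intro B hB
  rw [blockClosure, Set.mem_sInter]
  rintro 𝓒 ⟨h1, -⟩
  exact h1 hB

lemma blockClosure_subset {𝓘 𝓒 : Set (Block G)} (h1 : 𝓘 ⊆ 𝓒) (h2 : ConnBlocks G 𝓒) :
    blockClosure G 𝓘 ⊆ 𝓒 :=
  Set.sInter_subset_of_mem ⟨h1, h2⟩

lemma blockClosure_mono {I J : Set (Block G)} (h : I ⊆ J) :
    blockClosure G I ⊆ blockClosure G J := by
  intro B hB
  rw [blockClosure, Set.mem_sInter] at hB ⊢
  rintro 𝓒 ⟨h1, h2⟩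
  exact hB 𝓒 ⟨h.trans h1, h2⟩

lemma ibi_sum_le_one {𝓘 : Set (Block G)} {α : Block G → ℤ} (h : IsIBI G 𝓘 α)
    (s : Set (Block G)) (hconn : ConnBlocks G s) :
    (∑ᶠ B ∈ s, α B) ≤ 1 := by
  classical
  obtain ⟨-, hzero, hone, hnonpos, -, hsub⟩ := h
  set A := blockClosure G 𝓘 with hA
  have hIA : 𝓘 ⊆ A := subset_blockClosure 𝓘
  set I : Set (Block G) := 𝓘 ∩ s with hI
  have hIsub : I ⊆ 𝓘 := Set.inter_subset_left
  have hcl1 : blockClosure G I ⊆ s := blockClosure_subset Set.inter_subset_right hconn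
  have hcl2 : blockClosure G I ⊆ A := blockClosure_mono hIsub
  have hfin : ∀ t : Set (Block G), (∑ᶠ B ∈ t, α B) = ∑ B ∈ (Set.toFinite t).toFinset, α B :=
    fun t => finsum_mem_eq_finite_toFinset_sum α (Set.toFinite t)
  set sF := (Set.toFinite s).toFinset with hsF
  set IFs := (Set.toFinite I).toFinset with hIFs
  set KF := (Set.toFinite ((A \ 𝓘) ∩ s)).toFinset with hKF
  set LF := (Set.toFinite (blockClosure G I \ 𝓘)).toFinset with hLF
  rw [hfin]
  have hdisj : Disjoint IFs KF := by
    rw [Finset.disjoint_left]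
    intro B hB hB'
    rw [hIFs, Set.Finite.mem_toFinset] at hB
    rw [hKF, Set.Finite.mem_toFinset] at hB'
    exact hB'.1.2 hB.1
  have hsplit : ∑ B ∈ sF, α B = ∑ B ∈ IFs, α B + ∑ B ∈ KF, α B := by
    rw [← Finset.sum_union hdisj]
    refine (Finset.sum_subset ?_ ?_).symm
    · intro B hB
      rw [Finset.mem_union, hIFs, hKF, Set.Finite.mem_toFinset, Set.Finite.mem_toFinset] at hB
      rw [hsF, Set.Finite.mem_toFinset]
      rcases hB with hB | hB
      · exact hB.2
      · exact hB.2
    · intro B hB hB'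
      rw [Finset.mem_union, hIFs, hKF, Set.Finite.mem_toFinset, Set.Finite.mem_toFinset] at hB'
      rw [hsF, Set.Finite.mem_toFinset] at hB
      push_neg at hB'
      apply hzero
      intro hBA
      by_cases hBI : B ∈ 𝓘
      · exact hB'.1 ⟨hBI, hB⟩
      · exact hB'.2 ⟨⟨hBA, hBI⟩, hB⟩
  have h1 : ∑ B ∈ IFs, α B = (IFs.card : ℤ) := by
    rw [Finset.sum_congr rfl (fun B hB => hone B ?_)]
    · simp
    · rw [hIFs, Set.Finite.mem_toFinset] at hB
      exact hB.1
  have hLsub : LF ⊆ KF := by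
    intro B hB
    rw [hLF, Set.Finite.mem_toFinset] at hB
    rw [hKF, Set.Finite.mem_toFinset]
    exact ⟨⟨hcl2 hB.1, hB.2⟩, hcl1 hB.1⟩
  have h2 : ∑ B ∈ KF, α B ≤ ∑ B ∈ LF, α B := by
    have heq := Finset.sum_sdiff (f := α) hLsub
    have hnp : ∑ B ∈ KF \ LF, α B ≤ 0 := by
      apply Finset.sum_nonpos
      intro B hB
      rw [Finset.mem_sdiff, hKF, Set.Finite.mem_toFinset] at hB
      exact hnonpos B hB.1.1
    omega
  have h3 : ∑ B ∈ LF, α B ≤ -((I.ncard : ℤ) - 1) := by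
    rw [← hfin]
    exact hsub I hIsub
  have hcard : I.ncard = IFs.card := Set.ncard_eq_toFinset_card I (Set.toFinite I)
  rw [hsplit, h1]
  rw [hcard] at h3
  omega

lemma ibi_total {𝓘 : Set (Block G)} {α : Block G → ℤ} (h : IsIBI G 𝓘 α) :
    (∑ᶠ B ∈ (Set.univ : Set (Block G)), α B) = 1 := by
  classical
  obtain ⟨-, hzero, hone, hnonpos, hsum, -⟩ := h
  set A := blockClosure G 𝓘 with hA
  have hIA : 𝓘 ⊆ A := subset_blockClosure 𝓘
  have hfin : ∀ t : Set (Block G), (∑ᶠ B ∈ t, α B) = ∑ B ∈ (Set.toFinite t).toFinset, α B :=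
    fun t => finsum_mem_eq_finite_toFinset_sum α (Set.toFinite t)
  set uF := (Set.toFinite (Set.univ : Set (Block G))).toFinset with huF
  set IFs := (Set.toFinite 𝓘).toFinset with hIFs
  set KF := (Set.toFinite (A \ 𝓘)).toFinset with hKF
  rw [hfin]
  have hdisj : Disjoint IFs KF := by
    rw [Finset.disjoint_left]
    intro B hB hB'
    rw [hIFs, Set.Finite.mem_toFinset] at hB
    rw [hKF, Set.Finite.mem_toFinset] at hB'
    exact hB'.2 hB
  have hsplit : ∑ B ∈ uF, α B = ∑ B ∈ IFs, α B + ∑ B ∈ KF, α B := by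
    rw [← Finset.sum_union hdisj]
    refine (Finset.sum_subset ?_ ?_).symm
    · intro B hB
      rw [huF, Set.Finite.mem_toFinset]
      trivial
    · intro B hB hB'
      rw [Finset.mem_union, hIFs, hKF, Set.Finite.mem_toFinset, Set.Finite.mem_toFinset] at hB'
      push_neg at hB'
      apply hzero
      intro hBA
      by_cases hBI : B ∈ 𝓘
      · exact hB'.1 hBI
      · exact hB'.2 ⟨hBA, hBI⟩
  have h1 : ∑ B ∈ IFs, α B = (IFs.card : ℤ) := by
    rw [Finset.sum_congr rfl (fun B hB => hone B ?_)]
    · simp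
    · rw [hIFs, Set.Finite.mem_toFinset] at hB
      exact hB
  have h2 : ∑ B ∈ KF, α B = -((𝓘.ncard : ℤ) - 1) := by
    rw [← hfin]
    exact hsum
  have hcard : 𝓘.ncard = IFs.card := Set.ncard_eq_toFinset_card 𝓘 (Set.toFinite 𝓘)
  rw [hsplit, h1, h2, ← hcard]
  omega


/-- for a cut vertex `v` and an independent blocks inequality `(𝓘, α)` there is a
unique `H ∈ 𝒦_v` with `∑_{B ∈ 𝓑[H]} α_B = 1`, and any other `H' ∈ 𝒦_v` has
`∑_{B ∈ 𝓑[H']} α_B = 0`. -/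
theorem ibi_component_weight (G : SimpleGraph V) (hG : G.Connected)
    (v : V) (hv : IsCutVertex G v)
    (𝓘 : Set (Block G)) (α : Block G → ℤ) (h : IsIBI G 𝓘 α) :
    ∃ H ∈ Kv G v, (∑ᶠ B ∈ blocksOf G H, α B) = 1 ∧
      ∀ H' ∈ Kv G v, H' ≠ H → (∑ᶠ B ∈ blocksOf G H', α B) = 0 := by
  classical
  haveI : Fintype (G.induce ({v}ᶜ : Set V)).ConnectedComponent := Fintype.ofFinite _
  set fiber : (G.induce ({v}ᶜ : Set V)).ConnectedComponent → Set (Block G) :=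
    fun C => {B : Block G | compOf v B = C} with hfiber
  have hfibconn : ∀ C, ConnBlocks G (fiber C) := fun C =>
    connBlocks_of_comp_closed hG.preconnected v _ (fun B B' hB h' => h'.trans hB)
  have hcofibconn : ∀ C, ConnBlocks G {B : Block G | compOf v B ≠ C} := fun C =>
    connBlocks_of_comp_closed hG.preconnected v _ (fun B B' hB h' => by
      intro hc; exact hB (h' ▸ hc))
  set S : (G.induce ({v}ᶜ : Set V)).ConnectedComponent → ℤ :=
    fun C => ∑ᶠ B ∈ fiber C, α B with hS
  have hle : ∀ C, S C ≤ 1 := fun C => ibi_sum_le_one h _ (hfibconn C)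
  have hparts : ∀ C, S C + (∑ᶠ B ∈ {B : Block G | compOf v B ≠ C}, α B) = 1 := by
    intro C
    have hdisj : Disjoint (fiber C) {B : Block G | compOf v B ≠ C} := by
      rw [Set.disjoint_left]
      intro B hB hB'
      exact hB' hB
    have hcover : (Set.univ : Set (Block G)) = fiber C ∪ {B : Block G | compOf v B ≠ C} := by
      ext B
      simp only [Set.mem_univ, Set.mem_union, Set.mem_setOf_eq, true_iff, hfiber]
      exact em _
    rw [hS, ← finsum_mem_union hdisj (Set.toFinite _) (Set.toFinite _), ← hcover]
    exact ibi_total h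
  have hge : ∀ C, 0 ≤ S C := by
    intro C
    have h1 := hparts C
    have h2 := ibi_sum_le_one h _ (hcofibconn C)
    omega
  have htot : ∑ C, S C = 1 := by
    have hcover : (Set.univ : Set (Block G)) = ⋃ C, fiber C := by
      ext B
      simp only [Set.mem_univ, Set.mem_iUnion, true_iff, hfiber, Set.mem_setOf_eq]
      exact ⟨compOf v B, rfl⟩
    have hdisj : Pairwise (Function.onFun Disjoint fiber) := by
      intro C C' hne
      rw [Function.onFun, Set.disjoint_left]
      intro B hB hB'
      rw [hfiber, Set.mem_setOf_eq] at hB hB'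
      exact hne (hB ▸ hB')
    have := ibi_total h
    rw [hcover, finsum_mem_iUnion hdisj (fun C => Set.toFinite _)] at this
    rw [← finsum_eq_sum_of_fintype]
    exact this
  have hex : ∃ C₀, S C₀ = 1 := by
    by_contra hno
    push_neg at hno
    have hnp : ∀ C, S C ≤ 0 := by
      intro C
      have := hle C
      have := hno C
      omega
    have : ∑ C, S C ≤ 0 := Finset.sum_nonpos (fun C _ => hnp C)
    omega
  obtain ⟨C₀, hC₀⟩ := hex
  refine ⟨Hsub G v C₀, Hsub_mem_Kv G v C₀, ?_, ?_⟩
  · rw [blocksOf_Hsub]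
    exact hC₀
  · rintro H' ⟨C', rfl⟩ hne
    have hCC : C' ≠ C₀ := by
      rintro rfl
      exact hne rfl
    have hz : S C' = 0 := by
      have h1 : S C₀ + ∑ C ∈ Finset.univ.erase C₀, S C = 1 := by
        rw [Finset.add_sum_erase Finset.univ S (Finset.mem_univ C₀)]
        exact htot
      have h2 : ∑ C ∈ Finset.univ.erase C₀, S C = 0 := by omega
      exact (Finset.sum_eq_zero_iff_of_nonneg (fun C _ => hge C)).mp h2 C'
        (Finset.mem_erase.mpr ⟨hCC, Finset.mem_univ C'⟩)
    rw [show (⊤ : G.Subgraph).induce (Subtype.val '' C'.supp ∪ {v}) = Hsub G v C' from rfl,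
      blocksOf_Hsub]
    exact hz

end ConnectedBlocksPaper
end
end
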